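/- Let d ≥ 1, let π ∈ Δ^{d-1} be a probability vector, and let h, h̃ ∈ ℝ^d. Then Σ_k |(h·π)(h^k − h·π) − (h̃·π)(h̃^k − h̃·π)| ≤ ((d+1) max_k |h^k| + d max_{k,ℓ} |h̃^k − h̃^ℓ|) |h − h̃|, where h·π = Σ_j h^j π^j and |h − h̃| = Σ_k |h^k − h̃^k| is the ℓ¹-norm. -/
import Mathlib


/-- Inequality from the final step of the proof of Theorem 1.1: uniform bound
over the simplex for the quadratic observation term of the Wonham filter. -/
theorem quadratic_observation_term_bound
    (d : ℕ) (hd : 1 ≤ d) (π h h' : Fin d → ℝ)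
    (hπnn : ∀ i, 0 ≤ π i) (hπsum : ∑ i, π i = 1) :
    ∑ k, |(∑ j, h j * π j) * (h k - ∑ j, h j * π j) -
          (∑ j, h' j * π j) * (h' k - ∑ j, h' j * π j)| ≤
      ((d + 1) * (⨆ k : Fin d, |h k|) +
        d * ⨆ x : Fin d × Fin d, |h' x.1 - h' x.2|) *
        ∑ k, |h k - h' k| := by
  have hne : Nonempty (Fin d) := ⟨⟨0, hd⟩⟩
  set a := ∑ j, h j * π j with ha
  set a' := ∑ j, h' j * π j with ha'
  set M := ⨆ k : Fin d, |h k| with hM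
  set S := ⨆ x : Fin d × Fin d, |h' x.1 - h' x.2| with hS
  set D := ∑ k, |h k - h' k| with hD
  have hπle : ∀ i, π i ≤ 1 := by
    intro i
    calc π i ≤ ∑ j, π j :=
          Finset.single_le_sum (fun j _ => hπnn j) (Finset.mem_univ i)
    _ = 1 := hπsum
  have hMle : ∀ k, |h k| ≤ M :=
    fun k => le_ciSup (f := fun k => |h k|) (Set.Finite.bddAbove (Set.finite_range _)) k
  have hSle : ∀ k l, |h' k - h' l| ≤ S :=
    fun k l => le_ciSup (f := fun x : Fin d × Fin d => |h' x.1 - h' x.2|) (Set.Finite.bddAbove (Set.finite_range _)) (k, l)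
  have hM0 : 0 ≤ M := le_trans (abs_nonneg _) (hMle (Classical.arbitrary _))
  have hS0 : 0 ≤ S := le_trans (abs_nonneg _)
    (hSle (Classical.arbitrary _) (Classical.arbitrary _))
  have hD0 : 0 ≤ D := Finset.sum_nonneg fun k _ => abs_nonneg _
  have haM : |a| ≤ M := by
    calc |a| ≤ ∑ j, |h j * π j| := Finset.abs_sum_le_sum_abs _ _
    _ ≤ ∑ j, M * π j := by
        apply Finset.sum_le_sum; intro j _
        rw [abs_mul, abs_of_nonneg (hπnn j)]
        exact mul_le_mul_of_nonneg_right (hMle j) (hπnn j)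
    _ = M := by rw [← Finset.mul_sum, hπsum, mul_one]
  have haa' : |a - a'| ≤ D := by
    have h1 : a - a' = ∑ j, (h j - h' j) * π j := by
      rw [ha, ha', ← Finset.sum_sub_distrib]
      exact Finset.sum_congr rfl fun j _ => by ring
    rw [h1]
    calc |∑ j, (h j - h' j) * π j| ≤ ∑ j, |(h j - h' j) * π j| :=
          Finset.abs_sum_le_sum_abs _ _
    _ ≤ ∑ j, |h j - h' j| := by
        apply Finset.sum_le_sum; intro j _
        rw [abs_mul, abs_of_nonneg (hπnn j)]
        nlinarith [abs_nonneg (h j - h' j), hπle j, hπnn j]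
  have hka' : ∀ k, |h' k - a'| ≤ S := by
    intro k
    have h1 : h' k - a' = ∑ j, (h' k - h' j) * π j := by
      simp only [ha', sub_mul, Finset.sum_sub_distrib, ← Finset.mul_sum, hπsum,
        mul_one]
    rw [h1]
    calc |∑ j, (h' k - h' j) * π j| ≤ ∑ j, |(h' k - h' j) * π j| :=
          Finset.abs_sum_le_sum_abs _ _
    _ ≤ ∑ j, S * π j := by
        apply Finset.sum_le_sum; intro j _
        rw [abs_mul, abs_of_nonneg (hπnn j)]
        exact mul_le_mul_of_nonneg_right (hSle k j) (hπnn j)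
    _ = S := by rw [← Finset.mul_sum, hπsum, mul_one]
  have hterm : ∀ k, |a * (h k - a) - a' * (h' k - a')| ≤
      M * |h k - h' k| + M * D + D * S := by
    intro k
    have hdecomp : a * (h k - a) - a' * (h' k - a') =
        a * ((h k - h' k) - (a - a')) + (a - a') * (h' k - a') := by ring
    rw [hdecomp]
    calc |a * ((h k - h' k) - (a - a')) + (a - a') * (h' k - a')|
        ≤ |a * ((h k - h' k) - (a - a'))| + |(a - a') * (h' k - a')| :=
          abs_add_le _ _
    _ = |a| * |(h k - h' k) - (a - a')| + |a - a'| * |h' k - a'| := by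
          rw [abs_mul, abs_mul]
    _ ≤ M * (|h k - h' k| + D) + D * S := by
          have h1 : |(h k - h' k) - (a - a')| ≤ |h k - h' k| + D :=
            le_trans (abs_sub _ _) (by gcongr)
          have h2 : |a - a'| * |h' k - a'| ≤ D * S :=
            mul_le_mul haa' (hka' k) (abs_nonneg _) hD0
          gcongr
    _ = M * |h k - h' k| + M * D + D * S := by ring
  calc ∑ k, |a * (h k - a) - a' * (h' k - a')|
      ≤ ∑ k, (M * |h k - h' k| + M * D + D * S) :=
        Finset.sum_le_sum fun k _ => hterm k
  _ = M * D + d * (M * D) + d * (D * S) := by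
        rw [Finset.sum_add_distrib, Finset.sum_add_distrib, ← Finset.mul_sum,
          Finset.sum_const, Finset.sum_const, Finset.card_univ, Fintype.card_fin,
          nsmul_eq_mul, nsmul_eq_mul]
  _ = ((d + 1) * M + d * S) * D := by ring
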